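/- Let j_c > 0, γ > 1/2, and let Ω ⊆ ℝ³ be a Lebesgue-measurable set. Let f, w : Ω → ℝ³ be measurable with ∫_Ω |f|² dx < ∞ and ∫_Ω |w|² dx < ∞, and define D : Ω → ℝ³ by D(x) = j_c γ w(x) / max_γ{1, γ|f(x)|} − γ c_γ(f(x)) (f(x)·w(x)) Λ_γ(f(x)) / (max_γ{1, γ|f(x)|} |f(x)|) when f(x) ≠ 0 and D(x) = j_c γ w(x) when f(x) = 0. Then the superposition map is Gâteaux differentiable in L²: ∫_Ω |(Λ_γ(f(x) + t w(x)) − Λ_γ(f(x)))/t − D(x)|² dx → 0 as t → 0, t ≠ 0. -/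

import Mathlib

open scoped RealInnerProductSpace Topology
open Classical

/-- Moreau-Yosida regularization of the max-function `x ↦ max{1, x}`. -/
noncomputable def maxReg (γ x : ℝ) : ℝ :=
  if 1 / (2 * γ) ≤ x - 1 then x
  else if x - 1 ≤ -(1 / (2 * γ)) then 1
  else 1 + γ / 2 * (x - 1 + 1 / (2 * γ)) ^ 2

abbrev E3 := EuclideanSpace ℝ (Fin 3)

/-- The regularized dual-variable map `Λ_γ(e) = j_c γ e / max_γ{1, γ|e|}`. -/
noncomputable def Lam (jc γ : ℝ) (e : E3) : E3 :=
  (jc * γ / maxReg γ (γ * ‖e‖)) • e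

/-- The coefficient `c_γ(e)` arising in the derivative of `Λ_γ`. -/
noncomputable def cReg (γ : ℝ) (e : E3) : ℝ :=
  if 1 + 1 / (2 * γ) ≤ γ * ‖e‖ then 1
  else if |γ * ‖e‖ - 1| < 1 / (2 * γ) then γ * (γ * ‖e‖ - 1 + 1 / (2 * γ))
  else 0

noncomputable def mder (γ x : ℝ) : ℝ :=
  γ * (max (x - 1 + 1 / (2 * γ)) 0 - max (x - 1 - 1 / (2 * γ)) 0)

lemma maxReg_closed (γ : ℝ) (hγ : 0 < γ) (x : ℝ) :
    maxReg γ x = 1 + γ / 2 * max (x - 1 + 1 / (2 * γ)) 0 ^ 2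
      - γ / 2 * max (x - 1 - 1 / (2 * γ)) 0 ^ 2 := by
  have ha : 0 < 1 / (2 * γ) := by positivity
  unfold maxReg
  split_ifs with h1 h2
  · rw [max_eq_left (by linarith), max_eq_left (by linarith)]
    field_simp
    ring
  · rw [max_eq_right (by linarith), max_eq_right (by linarith)]
    ring
  · push_neg at h1 h2
    rw [max_eq_left (by linarith), max_eq_right (by linarith)]
    ring

lemma posPart_sq_hasDerivAt (s : ℝ) :
    HasDerivAt (fun s : ℝ => max s 0 ^ 2) (2 * max s 0) s := by
  rcases lt_trichotomy s 0 with h | h | h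
  · have hev : (fun s : ℝ => max s 0 ^ 2) =ᶠ[𝓝 s] fun _ => (0:ℝ) := by
      filter_upwards [eventually_lt_nhds h] with y hy
      rw [max_eq_right hy.le]; norm_num
    rw [max_eq_right h.le, mul_zero]
    exact (hasDerivAt_const s (0:ℝ)).congr_of_eventuallyEq hev
  · subst h
    rw [max_self, mul_zero]
    rw [hasDerivAt_iff_isLittleO]
    rw [Asymptotics.isLittleO_iff]
    intro c hc
    filter_upwards [Metric.ball_mem_nhds (0:ℝ) hc] with y hy
    simp only [max_self, ne_eq, OfNat.ofNat_ne_zero, not_false_eq_true, zero_pow, sub_zero,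
      smul_eq_mul, mul_zero, sub_zero]
    have h1 : |y| < c := by simpa [Real.dist_eq] using hy
    have h2 : max y 0 ^ 2 ≤ |y| * |y| := by
      rcases le_or_gt y 0 with h | h
      · rw [max_eq_right h]; nlinarith [abs_nonneg y]
      · rw [max_eq_left h.le, abs_of_pos h]; nlinarith
    calc ‖max y 0 ^ 2‖ = max y 0 ^ 2 := by
          rw [Real.norm_eq_abs, abs_of_nonneg (pow_nonneg (le_max_right y 0) 2)]
      _ ≤ |y| * |y| := h2
      _ ≤ c * ‖y‖ := by rw [Real.norm_eq_abs]; nlinarith [abs_nonneg y]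
  · have hev : (fun s : ℝ => max s 0 ^ 2) =ᶠ[𝓝 s] fun y => y ^ 2 := by
      filter_upwards [eventually_gt_nhds h] with y hy
      rw [max_eq_left hy.le]
    rw [max_eq_left h.le]
    have : HasDerivAt (fun y : ℝ => y ^ 2) (2 * s) s := by
      simpa using (hasDerivAt_pow 2 s)
    exact this.congr_of_eventuallyEq hev

lemma maxReg_hasDerivAt (γ : ℝ) (hγ : 0 < γ) (x : ℝ) :
    HasDerivAt (maxReg γ) (mder γ x) x := by
  have hfun : maxReg γ = fun x => 1 + γ / 2 * max (x - 1 + 1 / (2 * γ)) 0 ^ 2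
      - γ / 2 * max (x - 1 - 1 / (2 * γ)) 0 ^ 2 := funext (maxReg_closed γ hγ)
  have h1 : HasDerivAt (fun x : ℝ => max (x - (1 - 1 / (2 * γ))) 0 ^ 2)
      (2 * max (x - (1 - 1 / (2 * γ))) 0) x := by
    have := (posPart_sq_hasDerivAt (x - (1 - 1 / (2 * γ)))).comp x
      ((hasDerivAt_id x).sub_const (1 - 1 / (2 * γ)))
    simpa [Function.comp_def] using this
  have h2 : HasDerivAt (fun x : ℝ => max (x - (1 + 1 / (2 * γ))) 0 ^ 2)
      (2 * max (x - (1 + 1 / (2 * γ))) 0) x := by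
    have := (posPart_sq_hasDerivAt (x - (1 + 1 / (2 * γ)))).comp x
      ((hasDerivAt_id x).sub_const (1 + 1 / (2 * γ)))
    simpa [Function.comp_def] using this
  have h3 := ((h1.const_mul (γ / 2)).const_add 1).sub (h2.const_mul (γ / 2))
  rw [hfun]
  convert h3 using 1
  · rfl
  · rfl
  · ext y; rw [Pi.sub_apply]; ring_nf
  · unfold mder; ring_nf

lemma one_le_maxReg (γ : ℝ) (hγ : 0 < γ) (x : ℝ) : 1 ≤ maxReg γ x := by
  have ha : 0 < 1 / (2 * γ) := by positivity
  unfold maxReg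
  split_ifs with h1 h2
  · linarith
  · exact le_rfl
  · nlinarith [sq_nonneg (x - 1 + 1 / (2 * γ))]

lemma le_maxReg (γ : ℝ) (hγ : 0 < γ) (x : ℝ) : x ≤ maxReg γ x := by
  have ha : 0 < 1 / (2 * γ) := by positivity
  have ha2 : γ * (1 / (2 * γ)) = 1 / 2 := by field_simp
  unfold maxReg
  split_ifs with h1 h2
  · exact le_rfl
  · linarith
  · nlinarith [sq_nonneg (γ * (x - 1) - 1 / 2), sq_nonneg (x - 1 + 1 / (2 * γ))]

lemma maxReg_pos (γ : ℝ) (hγ : 0 < γ) (x : ℝ) : 0 < maxReg γ x :=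
  lt_of_lt_of_le one_pos (one_le_maxReg γ hγ x)

lemma mder_nonneg (γ : ℝ) (hγ : 0 < γ) (x : ℝ) : 0 ≤ mder γ x := by
  have ha : 0 < 1 / (2 * γ) := by positivity
  have : max (x - 1 - 1 / (2 * γ)) 0 ≤ max (x - 1 + 1 / (2 * γ)) 0 :=
    max_le_max (by linarith) le_rfl
  unfold mder
  nlinarith

lemma mder_le_one (γ : ℝ) (hγ : 0 < γ) (x : ℝ) : mder γ x ≤ 1 := by
  have ha : 0 < 1 / (2 * γ) := by positivity
  have hkey : max (x - 1 + 1 / (2 * γ)) 0 ≤ max (x - 1 - 1 / (2 * γ)) 0 + 2 * (1 / (2 * γ)) := by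
    apply max_le
    · have := le_max_left (x - 1 - 1 / (2 * γ)) 0
      linarith
    · have := le_max_right (x - 1 - 1 / (2 * γ)) 0
      linarith
  have h2 : γ * (2 * (1 / (2 * γ))) = 1 := by field_simp
  unfold mder
  nlinarith

lemma cReg_eq_mder (γ : ℝ) (hγ : 0 < γ) (e : E3) : cReg γ e = mder γ (γ * ‖e‖) := by
  have ha : 0 < 1 / (2 * γ) := by positivity
  unfold cReg mder
  split_ifs with h1 h2
  · rw [max_eq_left (by linarith), max_eq_left (by linarith)]
    field_simp
    ring
  · rw [abs_lt] at h2
    rw [max_eq_left (by linarith), max_eq_right (by linarith)]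
    ring
  · push_neg at h1 h2
    have hle : γ * ‖e‖ - 1 ≤ -(1 / (2 * γ)) := by
      rcases abs_cases (γ * ‖e‖ - 1) with ⟨h, h0⟩ | ⟨h, h0⟩ <;> linarith
    rw [max_eq_right (by linarith), max_eq_right (by linarith)]
    ring

lemma norm_hasFDerivAt (e : E3) (he : e ≠ 0) :
    HasFDerivAt (fun x : E3 => ‖x‖) (‖e‖⁻¹ • innerSL ℝ e) e := by
  have h1 : HasFDerivAt (fun x : E3 => ⟪x, x⟫) (2 • innerSL ℝ e) e := by
    have := (hasFDerivAt_id e).inner ℝ (hasFDerivAt_id e)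
    refine this.congr_fderiv ?_
    ext w
    simp only [fderivInnerCLM_apply, ContinuousLinearMap.smul_apply, innerSL_apply_apply,
      ContinuousLinearMap.comp_apply, ContinuousLinearMap.prod_apply,
      ContinuousLinearMap.id_apply, id, two_smul, ContinuousLinearMap.add_apply]
    rw [real_inner_comm]
  have hne : ⟪e, e⟫ ≠ 0 := by
    rw [real_inner_self_eq_norm_sq]
    exact pow_ne_zero 2 (norm_ne_zero_iff.mpr he)
  have h2 : HasDerivAt Real.sqrt (1 / (2 * Real.sqrt ⟪e,e⟫)) ⟪e,e⟫ :=
    Real.hasDerivAt_sqrt hne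
  have h3 := HasDerivAt.comp_hasFDerivAt (f := fun x : E3 => ⟪x, x⟫) e h2 h1
  have h4 : (fun x : E3 => Real.sqrt ⟪x, x⟫) = fun x : E3 => ‖x‖ := by
    ext x; rw [real_inner_self_eq_norm_sq]; exact Real.sqrt_sq (norm_nonneg x)
  have h5 : Real.sqrt ⟪e,e⟫ = ‖e‖ := by
    rw [real_inner_self_eq_norm_sq]; exact Real.sqrt_sq (norm_nonneg e)
  rw [show ((fun x : E3 => Real.sqrt ⟪x,x⟫) = Real.sqrt ∘ fun x : E3 => ⟪x,x⟫) from rfl] at h4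
  rw [h4] at h3
  refine h3.congr_fderiv ?_
  ext w
  simp only [ContinuousLinearMap.smul_apply, innerSL_apply_apply, h5, smul_eq_mul, two_smul,
    ContinuousLinearMap.add_apply]
  have : ‖e‖ ≠ 0 := norm_ne_zero_iff.mpr he
  field_simp
  ring

noncomputable def LamD (jc γ : ℝ) (e : E3) : E3 →L[ℝ] E3 :=
  (jc * γ / maxReg γ (γ * ‖e‖)) • ContinuousLinearMap.id ℝ E3
    - (jc * γ * γ * cReg γ e / (maxReg γ (γ * ‖e‖) ^ 2 * ‖e‖)) • (innerSL ℝ e).smulRight e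

lemma maxReg_zero (γ : ℝ) (hγ : 1 / 2 < γ) : maxReg γ 0 = 1 := by
  have hγ0 : 0 < γ := lt_trans (by norm_num) hγ
  have ha : 0 < 1 / (2 * γ) := by positivity
  have h1 : 1 / (2 * γ) ≤ 1 := by
    rw [div_le_one (by positivity)]; linarith
  unfold maxReg
  rw [if_neg (by linarith), if_pos (by linarith)]

lemma cReg_zero (γ : ℝ) (hγ : 1 / 2 < γ) : cReg γ 0 = 0 := by
  have hγ0 : 0 < γ := lt_trans (by norm_num) hγ
  have ha : 0 < 1 / (2 * γ) := by positivity
  have h1 : 1 / (2 * γ) ≤ 1 := by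
    rw [div_le_one (by positivity)]; linarith
  unfold cReg
  rw [norm_zero, mul_zero]
  rw [if_neg (by linarith), if_neg (by rw [abs_lt]; push_neg; intro h; linarith)]

lemma LamD_zero (jc γ : ℝ) (hγ : 1 / 2 < γ) :
    LamD jc γ 0 = (jc * γ) • ContinuousLinearMap.id ℝ E3 := by
  unfold LamD
  rw [norm_zero, mul_zero, maxReg_zero γ hγ, cReg_zero γ hγ]
  ext w
  simp

lemma Lam_hasFDerivAt (jc γ : ℝ) (hγ : 1 / 2 < γ) (e : E3) :
    HasFDerivAt (Lam jc γ) (LamD jc γ e) e := by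
  have hγ0 : 0 < γ := lt_trans (by norm_num) hγ
  rcases eq_or_ne e 0 with rfl | he
  · -- near zero, Lam is linear
    have hr : 0 < (1 - 1 / (2 * γ)) / γ := by
      have h : 1 / (2 * γ) < 1 := by rw [div_lt_one (by positivity)]; linarith
      exact div_pos (by linarith) hγ0
    have hlin : HasFDerivAt (fun x : E3 => (jc * γ) • x)
        ((jc * γ) • ContinuousLinearMap.id ℝ E3) 0 := by
      exact ((jc * γ) • ContinuousLinearMap.id ℝ E3).hasFDerivAt (x := (0:E3))
    rw [LamD_zero jc γ hγ]
    apply hlin.congr_of_eventuallyEq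
    filter_upwards [Metric.ball_mem_nhds (0:E3) hr] with x hx
    have hx' : ‖x‖ < (1 - 1 / (2 * γ)) / γ := by simpa using hx
    have h2 : γ * ‖x‖ - 1 ≤ -(1 / (2 * γ)) := by
      rw [lt_div_iff₀ hγ0] at hx'
      linarith [mul_comm γ ‖x‖]
    have h3 : ¬ (1 / (2 * γ) ≤ γ * ‖x‖ - 1) := by
      have : 0 < 1 / (2 * γ) := by positivity
      linarith
    unfold Lam maxReg
    rw [if_neg h3, if_pos h2, div_one]
  · -- nonzero case
    have hmpos : 0 < maxReg γ (γ * ‖e‖) := maxReg_pos γ hγ0 _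
    have hne : ‖e‖ ≠ 0 := norm_ne_zero_iff.mpr he
    have hN := norm_hasFDerivAt e he
    have hγn : HasFDerivAt (fun x : E3 => γ * ‖x‖) (γ • (‖e‖⁻¹ • innerSL ℝ e)) e :=
      hN.const_mul γ
    have hmx : HasFDerivAt (fun x : E3 => maxReg γ (γ * ‖x‖))
        (mder γ (γ * ‖e‖) • (γ • (‖e‖⁻¹ • innerSL ℝ e))) e :=
      by have := (maxReg_hasDerivAt γ hγ0 (γ * ‖e‖)).comp_hasFDerivAt e hγn; exact this
    have hinv : HasFDerivAt (fun x : E3 => (maxReg γ (γ * ‖x‖))⁻¹)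
        (-(maxReg γ (γ * ‖e‖) ^ 2)⁻¹ • (mder γ (γ * ‖e‖) • (γ • (‖e‖⁻¹ • innerSL ℝ e)))) e := by
      have := (hasDerivAt_inv hmpos.ne').comp_hasFDerivAt e hmx
      simpa [smul_smul, Function.comp_def] using this
    have hc : HasFDerivAt (fun x : E3 => jc * γ / maxReg γ (γ * ‖x‖))
        ((jc * γ) • (-(maxReg γ (γ * ‖e‖) ^ 2)⁻¹ • (mder γ (γ * ‖e‖) • (γ • (‖e‖⁻¹ • innerSL ℝ e))))) e := by
      have := hinv.const_mul (jc * γ)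
      simpa [div_eq_mul_inv] using this
    have hfin := hc.smul (hasFDerivAt_id e)
    have hfin' : HasFDerivAt (Lam jc γ)
        ((jc * γ / maxReg γ (γ * ‖e‖)) • ContinuousLinearMap.id ℝ E3 +
          ((jc * γ) • -(maxReg γ (γ * ‖e‖) ^ 2)⁻¹ • mder γ (γ * ‖e‖) • γ • ‖e‖⁻¹ • (innerSL ℝ) e).smulRight e) e := by
      exact hfin
    convert hfin' using 1
    refine ContinuousLinearMap.ext fun w => ?_
    simp only [LamD, ContinuousLinearMap.sub_apply, ContinuousLinearMap.add_apply,
      ContinuousLinearMap.smul_apply, ContinuousLinearMap.id_apply,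
      ContinuousLinearMap.smulRight_apply, innerSL_apply_apply, ContinuousLinearMap.coe_smul',
      Pi.smul_apply, smul_smul, cReg_eq_mder γ hγ0, smul_eq_mul]
    module

lemma cReg_nonneg (γ : ℝ) (hγ : 0 < γ) (e : E3) : 0 ≤ cReg γ e := by
  rw [cReg_eq_mder γ hγ]; exact mder_nonneg γ hγ _

lemma cReg_le_one (γ : ℝ) (hγ : 0 < γ) (e : E3) : cReg γ e ≤ 1 := by
  rw [cReg_eq_mder γ hγ]; exact mder_le_one γ hγ _

lemma LamD_opnorm (jc γ : ℝ) (hjc : 0 ≤ jc) (hγ : 1 / 2 < γ) (e : E3) :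
    ‖LamD jc γ e‖ ≤ 2 * (jc * γ) := by
  have hγ0 : 0 < γ := lt_trans (by norm_num) hγ
  apply ContinuousLinearMap.opNorm_le_bound _ (by positivity)
  intro w
  have hm1 : 1 ≤ maxReg γ (γ * ‖e‖) := one_le_maxReg γ hγ0 _
  have hmx : γ * ‖e‖ ≤ maxReg γ (γ * ‖e‖) := le_maxReg γ hγ0 _
  have hc0 : 0 ≤ cReg γ e := cReg_nonneg γ hγ0 e
  have hc1 : cReg γ e ≤ 1 := cReg_le_one γ hγ0 e
  rcases eq_or_ne e 0 with rfl | he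
  · rw [LamD_zero jc γ hγ]
    simp only [ContinuousLinearMap.smul_apply, ContinuousLinearMap.id_apply, norm_smul,
      Real.norm_eq_abs, abs_of_nonneg (by positivity : (0:ℝ) ≤ jc * γ)]
    nlinarith [norm_nonneg w, mul_nonneg hjc hγ0.le, mul_nonneg (mul_nonneg hjc hγ0.le) (norm_nonneg w)]
  · have hne : ‖e‖ ≠ 0 := norm_ne_zero_iff.mpr he
    have hnpos : 0 < ‖e‖ := norm_pos_iff.mpr he
    have happ : LamD jc γ e w = (jc * γ / maxReg γ (γ * ‖e‖)) • w
        - (jc * γ * γ * cReg γ e / (maxReg γ (γ * ‖e‖) ^ 2 * ‖e‖) * ⟪e, w⟫) • e := by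
      simp [LamD, smul_smul]
    rw [happ]
    have hmpos : 0 < maxReg γ (γ * ‖e‖) := maxReg_pos γ hγ0 _
    have h1 : ‖(jc * γ / maxReg γ (γ * ‖e‖)) • w‖ ≤ jc * γ * ‖w‖ := by
      rw [norm_smul, Real.norm_eq_abs, abs_of_nonneg (by positivity)]
      have : jc * γ / maxReg γ (γ * ‖e‖) ≤ jc * γ := by
        exact div_le_self (by positivity) hm1
      exact mul_le_mul_of_nonneg_right this (norm_nonneg w)
    have h2 : ‖(jc * γ * γ * cReg γ e / (maxReg γ (γ * ‖e‖) ^ 2 * ‖e‖) * ⟪e, w⟫) • e‖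
        ≤ jc * γ * ‖w‖ := by
      rw [norm_smul, Real.norm_eq_abs, abs_mul,
        abs_of_nonneg (by positivity : (0:ℝ) ≤ jc * γ * γ * cReg γ e / (maxReg γ (γ * ‖e‖) ^ 2 * ‖e‖))]
      have hiw : |⟪e, w⟫| ≤ ‖e‖ * ‖w‖ := abs_real_inner_le_norm e w
      have hkey : jc * γ * γ * cReg γ e / (maxReg γ (γ * ‖e‖) ^ 2 * ‖e‖) * (‖e‖ * ‖w‖) * ‖e‖
          ≤ jc * γ * ‖w‖ := by
        rw [div_mul_eq_mul_div, div_mul_eq_mul_div, div_le_iff₀ (by positivity)]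
        have hγce : γ * cReg γ e * ‖e‖ ≤ maxReg γ (γ * ‖e‖) ^ 2 := by
          nlinarith [mul_nonneg hγ0.le (norm_nonneg e)]
        nlinarith [mul_nonneg (mul_nonneg hjc hγ0.le) (mul_nonneg (norm_nonneg w)
          (mul_nonneg (norm_nonneg e) (norm_nonneg e))), norm_nonneg w,
          mul_nonneg hjc hγ0.le, mul_nonneg (mul_nonneg hjc hγ0.le) (norm_nonneg w)]
      calc jc * γ * γ * cReg γ e / (maxReg γ (γ * ‖e‖) ^ 2 * ‖e‖) * |⟪e, w⟫| * ‖e‖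
          ≤ jc * γ * γ * cReg γ e / (maxReg γ (γ * ‖e‖) ^ 2 * ‖e‖) * (‖e‖ * ‖w‖) * ‖e‖ := by
            apply mul_le_mul_of_nonneg_right (mul_le_mul_of_nonneg_left hiw (by positivity))
              (norm_nonneg e)
        _ ≤ jc * γ * ‖w‖ := hkey
    calc ‖(jc * γ / maxReg γ (γ * ‖e‖)) • w
        - (jc * γ * γ * cReg γ e / (maxReg γ (γ * ‖e‖) ^ 2 * ‖e‖) * ⟪e, w⟫) • e‖
        ≤ ‖(jc * γ / maxReg γ (γ * ‖e‖)) • w‖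
          + ‖(jc * γ * γ * cReg γ e / (maxReg γ (γ * ‖e‖) ^ 2 * ‖e‖) * ⟪e, w⟫) • e‖ :=
          norm_sub_le _ _
      _ ≤ 2 * (jc * γ) * ‖w‖ := by linarith

lemma Lam_lipschitz (jc γ : ℝ) (hjc : 0 ≤ jc) (hγ : 1 / 2 < γ) (a b : E3) :
    ‖Lam jc γ a - Lam jc γ b‖ ≤ 2 * (jc * γ) * ‖a - b‖ :=
  convex_univ.norm_image_sub_le_of_norm_hasFDerivWithin_le
    (fun x _ => (Lam_hasFDerivAt jc γ hγ x).hasFDerivWithinAt)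
    (fun x _ => LamD_opnorm jc γ hjc hγ x) (Set.mem_univ b) (Set.mem_univ a)

lemma maxReg_continuous (γ : ℝ) (hγ : 0 < γ) : Continuous (maxReg γ) := by
  have : maxReg γ = fun x => 1 + γ / 2 * max (x - 1 + 1 / (2 * γ)) 0 ^ 2
      - γ / 2 * max (x - 1 - 1 / (2 * γ)) 0 ^ 2 := funext (maxReg_closed γ hγ)
  rw [this]
  fun_prop

lemma Lam_continuous (jc γ : ℝ) (hγ : 0 < γ) : Continuous (Lam jc γ) := by
  unfold Lam
  apply Continuous.fun_smul _ continuous_id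
  exact continuous_const.div ((maxReg_continuous γ hγ).comp (continuous_const.mul continuous_norm))
    (fun x => (maxReg_pos γ hγ _).ne')

lemma cReg_continuous (γ : ℝ) (hγ : 0 < γ) : Continuous (cReg γ) := by
  have : cReg γ = fun e => mder γ (γ * ‖e‖) := funext (cReg_eq_mder γ hγ)
  rw [this]
  unfold mder
  fun_prop


/-- Gâteaux differentiability in L² of the superposition map of `Λ_γ`: the
difference quotients converge in L²(Ω) to the pointwise derivative `D`. -/
theorem Lam_superposition_gateaux (jc γ : ℝ) (hjc : 0 < jc) (hγ : 1 / 2 < γ)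
    (Ω : Set E3) (hΩ : MeasurableSet Ω) (f w : E3 → E3)
    (hf : Measurable f) (hw : Measurable w)
    (hf2 : MeasureTheory.IntegrableOn (fun x => ‖f x‖ ^ 2) Ω)
    (hw2 : MeasureTheory.IntegrableOn (fun x => ‖w x‖ ^ 2) Ω)
    (D : E3 → E3)
    (hD : ∀ x : E3, D x =
      if f x = 0 then (jc * γ) • w x
      else
        (jc * γ / maxReg γ (γ * ‖f x‖)) • w x
          - (γ * cReg γ (f x) * ⟪f x, w x⟫ /
              (maxReg γ (γ * ‖f x‖) * ‖f x‖)) • Lam jc γ (f x)) :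
    Filter.Tendsto
      (fun t : ℝ =>
        ∫ x in Ω, ‖t⁻¹ • (Lam jc γ (f x + t • w x) - Lam jc γ (f x)) - D x‖ ^ 2)
      (𝓝[≠] (0 : ℝ)) (𝓝 0) := by
  have hγ0 : 0 < γ := lt_trans (by norm_num) hγ
  -- D equals the derivative applied to w
  have hD' : ∀ x, D x = LamD jc γ (f x) (w x) := by
    intro x
    rw [hD x]
    by_cases h : f x = 0
    · rw [if_pos h, h, LamD_zero jc γ hγ]
      simp
    · rw [if_neg h]
      have hne : ‖f x‖ ≠ 0 := norm_ne_zero_iff.mpr h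
      have hmpos := maxReg_pos γ hγ0 (γ * ‖f x‖)
      simp only [LamD, Lam, ContinuousLinearMap.sub_apply, ContinuousLinearMap.smul_apply,
        ContinuousLinearMap.id_apply, ContinuousLinearMap.smulRight_apply, innerSL_apply_apply,
        smul_smul, smul_eq_mul]
      congr 2
      field_simp
  set K := 2 * (jc * γ) with hK
  have hKpos : 0 < K := by positivity
  have hDbound : ∀ x, ‖D x‖ ≤ K * ‖w x‖ := by
    intro x
    rw [hD' x]
    calc ‖LamD jc γ (f x) (w x)‖ ≤ ‖LamD jc γ (f x)‖ * ‖w x‖ :=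
          ContinuousLinearMap.le_opNorm _ _
      _ ≤ K * ‖w x‖ :=
          mul_le_mul_of_nonneg_right (LamD_opnorm jc γ hjc.le hγ _) (norm_nonneg _)
  have hquot : ∀ t : ℝ, t ≠ 0 → ∀ x,
      ‖t⁻¹ • (Lam jc γ (f x + t • w x) - Lam jc γ (f x))‖ ≤ K * ‖w x‖ := by
    intro t ht x
    rw [norm_smul]
    have hlip := Lam_lipschitz jc γ hjc.le hγ (f x + t • w x) (f x)
    rw [add_sub_cancel_left, norm_smul] at hlip
    have habs : 0 < |t| := abs_pos.mpr ht
    calc ‖t⁻¹‖ * ‖Lam jc γ (f x + t • w x) - Lam jc γ (f x)‖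
        ≤ ‖t⁻¹‖ * (K * (‖t‖ * ‖w x‖)) :=
          mul_le_mul_of_nonneg_left hlip (norm_nonneg _)
      _ = K * ‖w x‖ := by
          rw [norm_inv, Real.norm_eq_abs]
          field_simp
  -- measurability
  have hDformula : D = fun x => (jc * γ / maxReg γ (γ * ‖f x‖)) • w x
      - (jc * γ * γ * cReg γ (f x) / (maxReg γ (γ * ‖f x‖) ^ 2 * ‖f x‖) * ⟪f x, w x⟫) • f x := by
    funext x
    rw [hD' x]
    simp [LamD, smul_smul]
  have hmR : Measurable fun x => maxReg γ (γ * ‖f x‖) :=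
    (maxReg_continuous γ hγ0).measurable.comp (hf.norm.const_mul γ)
  have hcR : Measurable fun x => cReg γ (f x) :=
    (cReg_continuous γ hγ0).measurable.comp hf
  have hinner : Measurable fun x => ⟪f x, w x⟫ := hf.inner hw
  have hDmeas : Measurable D := by
    rw [hDformula]
    apply Measurable.sub
    · exact (measurable_const.div hmR).smul hw
    · apply Measurable.fun_smul _ hf
      exact ((measurable_const.mul hcR).div ((hmR.pow_const 2).mul hf.norm)).mul hinner
  have hmeasF : ∀ t : ℝ, MeasureTheory.AEStronglyMeasurable
      (fun x => ‖t⁻¹ • (Lam jc γ (f x + t • w x) - Lam jc γ (f x)) - D x‖ ^ 2)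
      (MeasureTheory.volume.restrict Ω) := by
    intro t
    apply Measurable.aestronglyMeasurable
    apply Measurable.pow_const
    apply Measurable.norm
    apply Measurable.sub _ hDmeas
    apply Measurable.fun_const_smul
    exact ((Lam_continuous jc γ hγ0).measurable.comp (hf.add (hw.const_smul t))).sub
      ((Lam_continuous jc γ hγ0).measurable.comp hf)
  -- bound
  have hboundInt : MeasureTheory.Integrable (fun x => (2 * K) ^ 2 * ‖w x‖ ^ 2)
      (MeasureTheory.volume.restrict Ω) := hw2.const_mul _
  have hbound : ∀ᶠ t in 𝓝[≠] (0:ℝ), ∀ᵐ x ∂(MeasureTheory.volume.restrict Ω),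
      ‖‖t⁻¹ • (Lam jc γ (f x + t • w x) - Lam jc γ (f x)) - D x‖ ^ 2‖
        ≤ (2 * K) ^ 2 * ‖w x‖ ^ 2 := by
    refine Filter.eventually_of_mem self_mem_nhdsWithin fun t ht => ?_
    have ht' : t ≠ 0 := ht
    refine Filter.Eventually.of_forall fun x => ?_
    have h1 := hquot t ht' x
    have h2 := hDbound x
    have h3 : ‖t⁻¹ • (Lam jc γ (f x + t • w x) - Lam jc γ (f x)) - D x‖ ≤ 2 * K * ‖w x‖ := by
      calc ‖t⁻¹ • (Lam jc γ (f x + t • w x) - Lam jc γ (f x)) - D x‖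
          ≤ ‖t⁻¹ • (Lam jc γ (f x + t • w x) - Lam jc γ (f x))‖ + ‖D x‖ := norm_sub_le _ _
        _ ≤ 2 * K * ‖w x‖ := by linarith
    rw [Real.norm_eq_abs, abs_of_nonneg (by positivity)]
    calc ‖t⁻¹ • (Lam jc γ (f x + t • w x) - Lam jc γ (f x)) - D x‖ ^ 2
        ≤ (2 * K * ‖w x‖) ^ 2 := by
          apply pow_le_pow_left₀ (norm_nonneg _) h3
      _ = (2 * K) ^ 2 * ‖w x‖ ^ 2 := by ring
  -- pointwise convergence
  have hlim : ∀ x, Filter.Tendsto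
      (fun t : ℝ => ‖t⁻¹ • (Lam jc γ (f x + t • w x) - Lam jc γ (f x)) - D x‖ ^ 2)
      (𝓝[≠] (0:ℝ)) (𝓝 0) := by
    intro x
    have hpath : HasDerivAt (fun t : ℝ => f x + t • w x) (w x) 0 := by
      simpa using ((hasDerivAt_id (0:ℝ)).smul_const (w x)).const_add (f x)
    have hL := Lam_hasFDerivAt jc γ hγ (f x)
    rw [show f x = f x + (0:ℝ) • w x by simp] at hL
    have hcomp := hL.comp_hasDerivAt 0 hpath
    rw [show f x + (0:ℝ) • w x = f x by simp] at hcomp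
    have hslope := hasDerivAt_iff_tendsto_slope_zero.mp hcomp
    have hslope' : Filter.Tendsto
        (fun t : ℝ => t⁻¹ • (Lam jc γ (f x + t • w x) - Lam jc γ (f x)))
        (𝓝[≠] (0:ℝ)) (𝓝 (D x)) := by
      rw [hD' x]
      refine hslope.congr fun t => ?_
      simp [Function.comp]
    have h4 := hslope'.sub (tendsto_const_nhds (x := D x))
    rw [sub_self] at h4
    have h5 := (h4.norm).pow 2
    simpa using h5
  have main := MeasureTheory.tendsto_integral_filter_of_dominated_convergence
    (μ := MeasureTheory.volume.restrict Ω)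
    (F := fun (t : ℝ) x => ‖t⁻¹ • (Lam jc γ (f x + t • w x) - Lam jc γ (f x)) - D x‖ ^ 2)
    (f := fun _ => (0:ℝ)) (l := 𝓝[≠] (0:ℝ))
    (fun x => (2 * K) ^ 2 * ‖w x‖ ^ 2)
    (Filter.Eventually.of_forall hmeasF) hbound hboundInt
    (Filter.Eventually.of_forall hlim)
  simpa using main
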